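/- Pointwise selection principle via approximate variation (metric case): let (X,d) be a metric space, T ⊆ ℝ nonempty, and f_j : T → X a sequence such that {f_j(t) : j ∈ ℕ} is relatively compact in X for each t ∈ T and limsup_j V_ε(f_j,T) < ∞ for every ε > 0. Then some subsequence of (f_j) converges pointwise on T to a function f : T → X that is bounded (has finite-diameter image) and regulated on T. -/

import Mathlib

open Filter Set Topology

noncomputable def jordanVar {X : Type*} [PseudoMetricSpace X] (f : ℝ → X) (S : Set ℝ) : ENNReal :=
  ⨆ (n : ℕ) (t : Fin (n+1) → ℝ) (_ : Monotone t) (_ : ∀ i, t i ∈ S),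
    ∑ i : Fin n, edist (f (t i.succ)) (f (t i.castSucc))

section Aux
variable {X : Type*} [PseudoMetricSpace X]

lemma sum_le_jordanVar (f : ℝ → X) (S : Set ℝ) {n : ℕ} {t : Fin (n+1) → ℝ}
    (h1 : Monotone t) (h2 : ∀ i, t i ∈ S) :
    ∑ i : Fin n, edist (f (t i.succ)) (f (t i.castSucc)) ≤ jordanVar f S :=
  le_iSup_of_le n <| le_iSup_of_le t <| le_iSup_of_le h1 <| le_iSup_of_le h2 le_rfl

lemma jordanVar_le {f : ℝ → X} {S : Set ℝ} {M : ENNReal}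
    (h : ∀ (n : ℕ) (t : Fin (n+1) → ℝ), Monotone t → (∀ i, t i ∈ S) →
      ∑ i : Fin n, edist (f (t i.succ)) (f (t i.castSucc)) ≤ M) :
    jordanVar f S ≤ M :=
  iSup_le fun n => iSup_le fun t => iSup_le fun h1 => iSup_le fun h2 => h n t h1 h2

lemma jordanVar_const (x : X) (S : Set ℝ) : jordanVar (fun _ => x) S = 0 := by
  refine le_antisymm (jordanVar_le fun n t _ _ => ?_) zero_le
  simp

lemma jordanVar_mono (f : ℝ → X) {S S' : Set ℝ} (h : S ⊆ S') :
    jordanVar f S ≤ jordanVar f S' :=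
  jordanVar_le fun n t h1 h2 => sum_le_jordanVar f S' h1 fun i => h (h2 i)

lemma edist_le_jordanVar {f : ℝ → X} {S : Set ℝ} {s u : ℝ} (hs : s ∈ S) (hu : u ∈ S)
    (hsu : s ≤ u) : edist (f s) (f u) ≤ jordanVar f S := by
  have h1 : Monotone (fun i : Fin 2 => if (i : ℕ) = 0 then s else u) := by
    intro i j hij
    fin_cases i <;> fin_cases j <;> simp_all
  have h2 : ∀ i : Fin 2, (if (i : ℕ) = 0 then s else u) ∈ S := by
    intro i; fin_cases i <;> simp [hs, hu]
  have := sum_le_jordanVar f S h1 h2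
  simpa [Fin.sum_univ_one, edist_comm] using this

lemma monotone_snoc {n : ℕ} {p : Fin (n+1) → ℝ} {x : ℝ} (hp : Monotone p)
    (hx : ∀ i, p i ≤ x) : Monotone (Fin.snoc (α := fun _ => ℝ) p x) := by
  intro i j hij
  induction j using Fin.lastCases with
  | last =>
    simp only [Fin.snoc_last]
    induction i using Fin.lastCases with
    | last => simp
    | cast i => simpa using hx i
  | cast j =>
    induction i using Fin.lastCases with
    | last => exact absurd (hij.trans_lt (Fin.castSucc_lt_last j)) (lt_irrefl _)
    | cast i =>
      simp only [Fin.snoc_castSucc]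
      exact hp (by simpa using hij)

lemma sum_snoc (f : ℝ → X) {m : ℕ} (p : Fin (m+1) → ℝ) (x : ℝ) :
    ∑ i : Fin (m+1), edist (f (Fin.snoc (α := fun _ => ℝ) p x i.succ)) (f (Fin.snoc (α := fun _ => ℝ) p x i.castSucc))
      = (∑ i : Fin m, edist (f (p i.succ)) (f (p i.castSucc)))
        + edist (f x) (f (p (Fin.last m))) := by
  rw [Fin.sum_univ_castSucc]
  congr 1
  · refine Finset.sum_congr rfl fun i _ => ?_
    rw [Fin.succ_castSucc, Fin.snoc_castSucc, Fin.snoc_castSucc]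
  · rw [Fin.succ_last, Fin.snoc_last, Fin.snoc_castSucc]

lemma jordanVar_eq_iSup (f : ℝ → X) (S : Set ℝ) :
    jordanVar f S = ⨆ p : Σ n : ℕ, {t : Fin (n+1) → ℝ // Monotone t ∧ ∀ i, t i ∈ S},
      ∑ i : Fin p.1, edist (f (p.2.1 i.succ)) (f (p.2.1 i.castSucc)) := by
  apply le_antisymm
  · exact jordanVar_le fun n t h1 h2 => le_iSup_of_le ⟨n, t, h1, h2⟩ le_rfl
  · exact iSup_le fun p => sum_le_jordanVar f S p.2.2.1 p.2.2.2

lemma jordanVar_Iic_add (g : ℝ → X) {T : Set ℝ} {s u : ℝ} (hs : s ∈ T) (hu : u ∈ T)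
    (hsu : s ≤ u) :
    jordanVar g (T ∩ Iic s) + edist (g s) (g u) ≤ jordanVar g (T ∩ Iic u) := by
  have hne : Nonempty (Σ n : ℕ, {t : Fin (n+1) → ℝ // Monotone t ∧ ∀ i, t i ∈ T ∩ Iic s}) :=
    ⟨⟨0, fun _ => s, monotone_const, fun _ => ⟨hs, le_refl s⟩⟩⟩
  rw [jordanVar_eq_iSup g (T ∩ Iic s), ENNReal.iSup_add]
  refine iSup_le fun p => ?_
  obtain ⟨n, t, hmono, hmem⟩ := p
  have hts : ∀ i, t i ≤ s := fun i => (hmem i).2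
  have h1 : Monotone (Fin.snoc (α := fun _ => ℝ) t s) := monotone_snoc hmono hts
  have h1' : ∀ i, Fin.snoc (α := fun _ => ℝ) t s i ≤ u := by
    intro i
    induction i using Fin.lastCases with
    | last => simpa using hsu
    | cast i => simpa using (hts i).trans hsu
  have h2 : Monotone (Fin.snoc (α := fun _ => ℝ) (Fin.snoc (α := fun _ => ℝ) t s) u) := monotone_snoc h1 h1'
  have hmem2 : ∀ i, Fin.snoc (α := fun _ => ℝ) (Fin.snoc (α := fun _ => ℝ) t s) u i ∈ T ∩ Iic u := by
    intro i
    induction i using Fin.lastCases with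
    | last => simp only [Fin.snoc_last]; exact ⟨hu, le_refl u⟩
    | cast i =>
      simp only [Fin.snoc_castSucc]
      induction i using Fin.lastCases with
      | last => simp only [Fin.snoc_last]; exact ⟨hs, hsu⟩
      | cast i =>
        simp only [Fin.snoc_castSucc]
        exact ⟨(hmem i).1, (hmem i).2.trans hsu⟩
  calc (∑ i : Fin n, edist (g (t i.succ)) (g (t i.castSucc))) + edist (g s) (g u)
      ≤ ∑ i : Fin (n+2), edist (g (Fin.snoc (α := fun _ => ℝ) (Fin.snoc (α := fun _ => ℝ) t s) u i.succ))
          (g (Fin.snoc (α := fun _ => ℝ) (Fin.snoc (α := fun _ => ℝ) t s) u i.castSucc)) := by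
        rw [sum_snoc, sum_snoc, Fin.snoc_last]
        rw [edist_comm (g s) (g u)]
        exact add_le_add le_self_add le_rfl
    _ ≤ jordanVar g (T ∩ Iic u) := sum_le_jordanVar _ _ h2 hmem2

end Aux

section Aux2
variable {X : Type*} [PseudoMetricSpace X]

lemma dist_le_of_var {g : ℝ → X} {T : Set ℝ} {C : ENNReal} (hC : C ≠ ⊤)
    (hg : jordanVar g T ≤ C) {s u : ℝ} (hs : s ∈ T) (hu : u ∈ T) (hsu : s ≤ u) :
    dist (g s) (g u) ≤ (jordanVar g (T ∩ Iic u)).toReal - (jordanVar g (T ∩ Iic s)).toReal := by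
  have key := jordanVar_Iic_add g hs hu hsu
  have h1 : jordanVar g (T ∩ Iic u) ≤ C := (jordanVar_mono g inter_subset_left).trans hg
  have h2 : jordanVar g (T ∩ Iic s) ≤ C := (jordanVar_mono g inter_subset_left).trans hg
  have hfin1 : jordanVar g (T ∩ Iic u) ≠ ⊤ := (h1.trans_lt hC.lt_top).ne
  have hfin2 : jordanVar g (T ∩ Iic s) ≠ ⊤ := (h2.trans_lt hC.lt_top).ne
  have hd : edist (g s) (g u) ≠ ⊤ := edist_ne_top _ _
  have h3 := ENNReal.toReal_mono hfin1 key
  rw [ENNReal.toReal_add hfin2 hd] at h3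
  rw [dist_edist]
  linarith

lemma dist_le_toReal_of_var {g : ℝ → X} {T : Set ℝ} {C : ENNReal} (hC : C ≠ ⊤)
    (hg : jordanVar g T ≤ C) {s u : ℝ} (hs : s ∈ T) (hu : u ∈ T) :
    dist (g s) (g u) ≤ C.toReal := by
  rcases le_total s u with h | h
  · have h2 := (edist_le_jordanVar hs hu h).trans hg
    rw [dist_edist]; exact ENNReal.toReal_mono hC h2
  · have h2 := (edist_le_jordanVar hu hs h).trans hg
    rw [dist_comm, dist_edist]; exact ENNReal.toReal_mono hC h2

end Aux2

lemma countable_right_isolated (T : Set ℝ) :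
    Set.Countable {t ∈ T | ∃ δ > 0, T ∩ Ioo t (t + δ) = ∅} := by
  have hsub : {t ∈ T | ∃ δ > 0, T ∩ Ioo t (t + δ) = ∅} ⊆
      ⋃ q : ℚ, {t | t ∈ T ∧ t < (q : ℝ) ∧ ∀ x ∈ T, ¬(t < x ∧ x < (q : ℝ))} := by
    rintro t ⟨ht, δ, hδ, hempty⟩
    obtain ⟨q, hq1, hq2⟩ := exists_rat_btwn (show t < t + δ by linarith)
    refine mem_iUnion.2 ⟨q, ht, hq1, fun x hx hxq => ?_⟩
    have hmem : x ∈ T ∩ Ioo t (t + δ) := ⟨hx, hxq.1, lt_trans hxq.2 hq2⟩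
    rw [hempty] at hmem; exact hmem
  refine Set.Countable.mono hsub (countable_iUnion fun q => ?_)
  refine Set.Subsingleton.countable fun t1 h1 t2 h2 => ?_
  by_contra hne
  rcases lt_or_gt_of_ne hne with h | h
  · exact h1.2.2 t2 h2.1 ⟨h, h2.2.1⟩
  · exact h2.2.2 t1 h1.1 ⟨h, h1.2.1⟩

lemma countable_left_isolated (T : Set ℝ) :
    Set.Countable {t ∈ T | ∃ δ > 0, T ∩ Ioo (t - δ) t = ∅} := by
  have hsub : {t ∈ T | ∃ δ > 0, T ∩ Ioo (t - δ) t = ∅} ⊆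
      ⋃ q : ℚ, {t | t ∈ T ∧ (q : ℝ) < t ∧ ∀ x ∈ T, ¬((q : ℝ) < x ∧ x < t)} := by
    rintro t ⟨ht, δ, hδ, hempty⟩
    obtain ⟨q, hq1, hq2⟩ := exists_rat_btwn (show t - δ < t by linarith)
    refine mem_iUnion.2 ⟨q, ht, hq2, fun x hx hxq => ?_⟩
    have hmem : x ∈ T ∩ Ioo (t - δ) t := ⟨hx, lt_trans hq1 hxq.1, hxq.2⟩
    rw [hempty] at hmem; exact hmem
  refine Set.Countable.mono hsub (countable_iUnion fun q => ?_)
  refine Set.Subsingleton.countable fun t1 h1 t2 h2 => ?_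
  by_contra hne
  rcases lt_or_gt_of_ne hne with h | h
  · exact h2.2.2 t1 h1.1 ⟨h1.2.1, h⟩
  · exact h1.2.2 t2 h2.1 ⟨h2.2.1, h⟩

noncomputable def appVar {X : Type*} [PseudoMetricSpace X] (ε : ℝ) (f : ℝ → X) (S : Set ℝ) : ENNReal :=
  ⨅ (g : ℝ → X) (_ : jordanVar g S < ⊤) (_ : ∀ t ∈ S, dist (f t) (g t) ≤ ε), jordanVar g S

def RegulatedOn {X : Type*} [PseudoMetricSpace X] (f : ℝ → X) (T : Set ℝ) : Prop :=
  (∀ τ ∈ T, (∀ δ > 0, (T ∩ Set.Ioo (τ - δ) τ).Nonempty) →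
    ∀ η > 0, ∃ δ > 0, ∀ s ∈ T ∩ Set.Ioo (τ - δ) τ, ∀ u ∈ T ∩ Set.Ioo (τ - δ) τ,
      dist (f s) (f u) ≤ η) ∧
  (∀ τ ∈ T, (∀ δ > 0, (T ∩ Set.Ioo τ (τ + δ)).Nonempty) →
    ∀ η > 0, ∃ δ > 0, ∀ s ∈ T ∩ Set.Ioo τ (τ + δ), ∀ u ∈ T ∩ Set.Ioo τ (τ + δ),
      dist (f s) (f u) ≤ η)

set_option maxHeartbeats 2000000 in
theorem stmt19 {X : Type*} [MetricSpace X] (T : Set ℝ) (hT : T.Nonempty)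
    (F : ℕ → ℝ → X)
    (hcpt : ∀ t ∈ T, IsCompact (closure (Set.range fun j => F j t)))
    (hvar : ∀ ε : ℝ, 0 < ε →
      Filter.limsup (fun j => appVar ε (F j) T) Filter.atTop < ⊤) :
    ∃ φ : ℕ → ℕ, StrictMono φ ∧ ∃ f : ℝ → X,
      (∀ t ∈ T, Filter.Tendsto (fun k => F (φ k) t) Filter.atTop (nhds (f t))) ∧
      EMetric.diam (f '' T) < ⊤ ∧ RegulatedOn f T := by
  classical
  obtain ⟨t₀, ht₀⟩ := hT
  set ε : ℕ → ℝ := fun k => 1 / ((k : ℝ) + 1) with hεdef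
  have hεpos : ∀ k, 0 < ε k := fun k => by positivity
  have hεsmall : ∀ c : ℝ, 0 < c → ∃ k, ε k < c := fun c hc => exists_nat_one_div_lt hc
  -- choose the constants C k and the approximating functions G k j
  have hC : ∀ k : ℕ, ∃ C : ENNReal, C ≠ ⊤ ∧ ∀ᶠ j in atTop, ∃ g : ℝ → X,
      jordanVar g T ≤ C ∧ ∀ t ∈ T, dist (F j t) (g t) ≤ ε k := by
    intro k
    have h1 := hvar (ε k) (hεpos k)
    refine ⟨limsup (fun j => appVar (ε k) (F j) T) atTop + 1,
      ENNReal.add_ne_top.2 ⟨h1.ne, ENNReal.one_ne_top⟩, ?_⟩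
    have h2 : ∀ᶠ j in atTop, appVar (ε k) (F j) T <
        limsup (fun j => appVar (ε k) (F j) T) atTop + 1 :=
      eventually_lt_of_limsup_lt (ENNReal.lt_add_right h1.ne one_ne_zero)
    filter_upwards [h2] with j hj
    unfold appVar at hj
    obtain ⟨g, hg⟩ := iInf_lt_iff.mp hj
    obtain ⟨hgfin, hg⟩ := iInf_lt_iff.mp hg
    obtain ⟨hgdist, hg⟩ := iInf_lt_iff.mp hg
    exact ⟨g, hg.le, hgdist⟩
  choose C hCtop hCev using hC
  have hGdef : ∀ k j, ∃ g : ℝ → X, jordanVar g T ≤ C k ∧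
      ((∃ g' : ℝ → X, jordanVar g' T ≤ C k ∧ ∀ t ∈ T, dist (F j t) (g' t) ≤ ε k) →
        ∀ t ∈ T, dist (F j t) (g t) ≤ ε k) := by
    intro k j
    by_cases h : ∃ g' : ℝ → X, jordanVar g' T ≤ C k ∧ ∀ t ∈ T, dist (F j t) (g' t) ≤ ε k
    · obtain ⟨g, hg1, hg2⟩ := h; exact ⟨g, hg1, fun _ => hg2⟩
    · exact ⟨fun _ => F j t₀, by rw [jordanVar_const]; exact zero_le, fun h' => absurd h' h⟩
  choose G hG1 hG2 using hGdef
  have hGev : ∀ k, ∀ᶠ j in atTop, ∀ t ∈ T, dist (F j t) (G k j t) ≤ ε k := by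
    intro k; filter_upwards [hCev k] with j hj
    exact hG2 k j hj
  -- the variation functions
  set V : ℕ → ℕ → ℝ → ℝ := fun k j s => (jordanVar (G k j) (T ∩ Iic s)).toReal with hVdef
  have hVmem : ∀ k j s, V k j s ∈ Icc 0 (C k).toReal := by
    intro k j s
    exact ⟨ENNReal.toReal_nonneg, ENNReal.toReal_mono (hCtop k)
      ((jordanVar_mono _ inter_subset_left).trans (hG1 k j))⟩
  have hVmono : ∀ k j {s u : ℝ}, s ≤ u → V k j s ≤ V k j u := by
    intro k j s u hsu
    refine ENNReal.toReal_mono ?_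
      (jordanVar_mono _ (inter_subset_inter_right _ (Iic_subset_Iic.2 hsu)))
    exact (((jordanVar_mono _ inter_subset_left).trans (hG1 k j)).trans_lt
      (hCtop k).lt_top).ne
  have hVdist : ∀ k j {s u : ℝ}, s ∈ T → u ∈ T → s ≤ u →
      dist (G k j s) (G k j u) ≤ V k j u - V k j s := by
    intro k j s u hs hu hsu
    exact dist_le_of_var (hCtop k) (hG1 k j) hs hu hsu
  -- countable dense subset of T
  obtain ⟨D', hD'c, hD'd⟩ := TopologicalSpace.exists_countable_dense ↥T
  set D₀ : Set ℝ := Subtype.val '' D' with hD₀def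
  have hD₀T : D₀ ⊆ T := by rintro x ⟨y, _, rfl⟩; exact y.2
  have hD₀c : D₀.Countable := (hD'c.image _)
  have hD₀dense : ∀ t ∈ T, ∀ δ > 0, ∃ s ∈ D₀, dist s t < δ := by
    intro t ht δ hδ
    have h1 : (⟨t, ht⟩ : ↥T) ∈ closure D' := hD'd _
    rw [Metric.mem_closure_iff] at h1
    obtain ⟨b, hb, hdist⟩ := h1 δ hδ
    refine ⟨b.1, ⟨b, hb, rfl⟩, ?_⟩
    rw [Subtype.dist_eq] at hdist
    rw [dist_comm]; exact hdist
  have hacc_left : ∀ t, (∀ δ > 0, (T ∩ Ioo (t - δ) t).Nonempty) →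
      ∀ δ > 0, (D₀ ∩ Ioo (t - δ) t).Nonempty := by
    intro t h δ hδ
    obtain ⟨t', ht'T, ht'mem⟩ := h δ hδ
    have h1 : 0 < min (t - t') (t' - (t - δ)) :=
      lt_min (by linarith [ht'mem.2]) (by linarith [ht'mem.1])
    obtain ⟨s, hsD, hs⟩ := hD₀dense t' ht'T _ h1
    rw [Real.dist_eq] at hs
    have h2 := abs_lt.1 (hs.trans_le (min_le_left _ _))
    have h3 := abs_lt.1 (hs.trans_le (min_le_right _ _))
    exact ⟨s, hsD, by constructor <;> linarith⟩
  have hacc_right : ∀ t, (∀ δ > 0, (T ∩ Ioo t (t + δ)).Nonempty) →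
      ∀ δ > 0, (D₀ ∩ Ioo t (t + δ)).Nonempty := by
    intro t h δ hδ
    obtain ⟨t', ht'T, ht'mem⟩ := h δ hδ
    have h1 : 0 < min (t' - t) ((t + δ) - t') :=
      lt_min (by linarith [ht'mem.1]) (by linarith [ht'mem.2])
    obtain ⟨s, hsD, hs⟩ := hD₀dense t' ht'T _ h1
    rw [Real.dist_eq] at hs
    have h2 := abs_lt.1 (hs.trans_le (min_le_left _ _))
    have h3 := abs_lt.1 (hs.trans_le (min_le_right _ _))
    exact ⟨s, hsD, by constructor <;> linarith⟩
  -- first extraction: convergence of F on D₀ and of V on D₀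
  haveI : Countable ↥D₀ := hD₀c.to_subtype
  have hKc : IsCompact ((univ.pi fun s : ↥D₀ => closure (range fun j => F j s.1)) ×ˢ
      (univ.pi fun k : ℕ => univ.pi fun s : ↥D₀ => Icc (0:ℝ) (C k).toReal)) := by
    apply IsCompact.prod
    · exact isCompact_univ_pi fun s => hcpt s.1 (hD₀T s.2)
    · exact isCompact_univ_pi fun k => isCompact_univ_pi fun s => isCompact_Icc
  have hcK : ∀ j, ((fun s : ↥D₀ => F j s.1, fun (k : ℕ) (s : ↥D₀) => V k j s.1) :
      (↥D₀ → X) × (ℕ → ↥D₀ → ℝ)) ∈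
      ((univ.pi fun s : ↥D₀ => closure (range fun j => F j s.1)) ×ˢ
        (univ.pi fun k : ℕ => univ.pi fun s : ↥D₀ => Icc (0:ℝ) (C k).toReal)) := by
    intro j
    constructor
    · intro s _
      exact subset_closure ⟨j, rfl⟩
    · intro k _ s _
      exact hVmem k j s.1
  obtain ⟨a, -, φ₀, hφ₀, ha⟩ := hKc.tendsto_subseq hcK
  have hFlim₀ : ∀ s : ↥D₀, Tendsto (fun j => F (φ₀ j) s.1) atTop (𝓝 (a.1 s)) := by
    intro s
    exact (((continuous_apply s).comp continuous_fst).tendsto a).comp ha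
  have hVlim₀ : ∀ (k : ℕ) (s : ↥D₀),
      Tendsto (fun j => V k (φ₀ j) s.1) atTop (𝓝 (a.2 k s)) := by
    intro k s
    exact (((continuous_apply s).comp ((continuous_apply k).comp continuous_snd)).tendsto a).comp ha
  set w : ℕ → ℝ → ℝ := fun k s => if h : s ∈ D₀ then a.2 k ⟨s, h⟩ else 0 with hwdef
  have hwlim : ∀ (k : ℕ) (s : ℝ) (hs : s ∈ D₀),
      Tendsto (fun j => V k (φ₀ j) s) atTop (𝓝 (w k s)) := by
    intro k s hs
    have := hVlim₀ k ⟨s, hs⟩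
    simpa [hwdef, hs] using this
  have hwmem : ∀ k s, s ∈ D₀ → w k s ∈ Icc (0:ℝ) (C k).toReal := fun k s hs =>
    isClosed_Icc.mem_of_tendsto (hwlim k s hs) (Eventually.of_forall fun j => hVmem k (φ₀ j) s)
  -- the monotone envelopes and their discontinuity sets
  set W : ℕ → ℝ → ℝ := fun k x => sSup (w k '' (D₀ ∩ Iio x)) with hWdef
  have hbddW : ∀ k x, BddAbove (w k '' (D₀ ∩ Iio x)) := fun k x =>
    ⟨(C k).toReal, by rintro y ⟨s, hs, rfl⟩; exact (hwmem k s hs.1).2⟩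
  have hWmono : ∀ k, Monotone (W k) := by
    intro k x y hxy
    rcases (D₀ ∩ Iio x).eq_empty_or_nonempty with h | h
    · rw [hWdef]; simp only [h, image_empty, Real.sSup_empty]
      rcases (D₀ ∩ Iio y).eq_empty_or_nonempty with h' | h'
      · simp [h', Real.sSup_empty]
      · obtain ⟨s, hs⟩ := h'
        exact le_trans (hwmem k s hs.1).1 (le_csSup (hbddW k y) (mem_image_of_mem _ hs))
    · exact csSup_le_csSup (hbddW k y) (h.image _)
        (image_mono (inter_subset_inter_right _ (Iio_subset_Iio hxy)))
  set L : Set ℝ := {t ∈ T | ∃ δ > 0, T ∩ Ioo (t - δ) t = ∅} with hLdef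
  set R : Set ℝ := {t ∈ T | ∃ δ > 0, T ∩ Ioo t (t + δ) = ∅} with hRdef
  set E : Set ℝ := T ∩ (L ∪ R ∪ ⋃ k, {x | ¬ContinuousAt (W k) x}) with hEdef
  have hEc : E.Countable :=
    Set.Countable.mono inter_subset_right
      (((countable_left_isolated T).union (countable_right_isolated T)).union
        (countable_iUnion fun k => (hWmono k).countable_not_continuousAt))
  have hET : E ⊆ T := inter_subset_left
  -- second extraction: convergence of F on E
  haveI : Countable ↥E := hEc.to_subtype
  obtain ⟨b, -, φ₁, hφ₁, hb⟩ :=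
    (isCompact_univ_pi fun s : ↥E => hcpt s.1 (hET s.2)).tendsto_subseq
      (x := fun j => fun s : ↥E => F (φ₀ j) s.1)
      (fun j s _ => subset_closure ⟨φ₀ j, rfl⟩)
  set φ : ℕ → ℕ := φ₀ ∘ φ₁ with hφdef
  have hφ : StrictMono φ := hφ₀.comp hφ₁
  have hFlimD : ∀ (s : ℝ) (hs : s ∈ D₀),
      Tendsto (fun j => F (φ j) s) atTop (𝓝 (a.1 ⟨s, hs⟩)) := fun s hs =>
    (hFlim₀ ⟨s, hs⟩).comp hφ₁.tendsto_atTop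
  have hFlimE : ∀ (s : ℝ) (hs : s ∈ E),
      Tendsto (fun j => F (φ j) s) atTop (𝓝 (b ⟨s, hs⟩)) := by
    intro s hs
    exact ((continuous_apply (⟨s, hs⟩ : ↥E)).tendsto b).comp hb
  have hVlimφ : ∀ (k : ℕ) (s : ℝ), s ∈ D₀ →
      Tendsto (fun j => V k (φ j) s) atTop (𝓝 (w k s)) := fun k s hs =>
    (hwlim k s hs).comp hφ₁.tendsto_atTop
  have hGevφ : ∀ k, ∀ᶠ j in atTop, ∀ t ∈ T, dist (F (φ j) t) (G k (φ j) t) ≤ ε k :=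
    fun k => hφ.tendsto_atTop.eventually (hGev k)
  -- every point of T gives a Cauchy sequence
  have key : ∀ t ∈ T, CauchySeq fun j => F (φ j) t := by
    intro t ht
    by_cases htDE : t ∈ D₀ ∨ t ∈ E
    · rcases htDE with h | h
      · exact (hFlimD t h).cauchySeq
      · exact (hFlimE t h).cauchySeq
    push_neg at htDE
    obtain ⟨htD, htE⟩ := htDE
    have htbad : t ∉ L ∪ R ∪ ⋃ k, {x | ¬ContinuousAt (W k) x} := fun h => htE ⟨ht, h⟩
    have htL : t ∉ L := fun h => htbad (Or.inl (Or.inl h))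
    have htR : t ∉ R := fun h => htbad (Or.inl (Or.inr h))
    have htW : ∀ k, ContinuousAt (W k) t := by
      intro k
      by_contra h
      exact htbad (Or.inr (mem_iUnion.2 ⟨k, h⟩))
    have haccT_left : ∀ δ > 0, (T ∩ Ioo (t - δ) t).Nonempty := by
      intro δ hδ
      rcases (T ∩ Ioo (t - δ) t).eq_empty_or_nonempty with h | h
      · exact absurd ⟨ht, δ, hδ, h⟩ htL
      · exact h
    have haccT_right : ∀ δ > 0, (T ∩ Ioo t (t + δ)).Nonempty := by
      intro δ hδ
      rcases (T ∩ Ioo t (t + δ)).eq_empty_or_nonempty with h | h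
      · exact absurd ⟨ht, δ, hδ, h⟩ htR
      · exact h
    have haccD_left := hacc_left t haccT_left
    have haccD_right := hacc_right t haccT_right
    rw [Metric.cauchySeq_iff]
    intro η hη
    obtain ⟨k, hk⟩ := hεsmall (η / 16) (by linarith)
    have hbddB : BddBelow (w k '' (D₀ ∩ Ioi t)) :=
      ⟨0, by rintro y ⟨s, hs, rfl⟩; exact (hwmem k s hs.1).1⟩
    have hBne : (w k '' (D₀ ∩ Ioi t)).Nonempty := by
      obtain ⟨s, hs⟩ := haccD_right 1 one_pos
      exact ⟨w k s, mem_image_of_mem _ ⟨hs.1, hs.2.1⟩⟩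
    have hAne : (w k '' (D₀ ∩ Iio t)).Nonempty := by
      obtain ⟨s, hs⟩ := haccD_left 1 one_pos
      exact ⟨w k s, mem_image_of_mem _ ⟨hs.1, hs.2.2⟩⟩
    -- the inf from the right is at most W k t
    have hBA : sInf (w k '' (D₀ ∩ Ioi t)) ≤ W k t := by
      have h1 : ∀ x ∈ Ioi t, sInf (w k '' (D₀ ∩ Ioi t)) ≤ W k x := by
        intro x hx
        obtain ⟨q, hqD, hq⟩ := haccD_right (x - t) (by simp at hx; linarith [hx])
        have hq2 : q < x := by have := hq.2; linarith
        calc sInf (w k '' (D₀ ∩ Ioi t)) ≤ w k q := csInf_le hbddB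
              (mem_image_of_mem _ ⟨hqD, hq.1⟩)
          _ ≤ W k x := le_csSup (hbddW k x) (mem_image_of_mem _ ⟨hqD, hq2⟩)
      have h2 : Tendsto (W k) (𝓝[>] t) (𝓝 (W k t)) := ((htW k).continuousWithinAt)
      exact ge_of_tendsto h2 (Filter.eventually_of_mem self_mem_nhdsWithin h1)
    set η' := η / 16 with hη'def
    have hη' : 0 < η' := by rw [hη'def]; linarith
    obtain ⟨ws, ⟨s, hsmem, rfl⟩, hws⟩ := exists_lt_of_lt_csSup hAne
      (show W k t - η' < W k t by linarith)
    obtain ⟨ws', ⟨s', hs'mem, rfl⟩, hws'⟩ := exists_lt_of_csInf_lt hBne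
      (show sInf (w k '' (D₀ ∩ Ioi t)) < sInf (w k '' (D₀ ∩ Ioi t)) + η' by linarith)
    -- gather the eventual bounds
    have hcauchyS : CauchySeq fun j => F (φ j) s := (hFlimD s hsmem.1).cauchySeq
    rw [Metric.cauchySeq_iff] at hcauchyS
    obtain ⟨N₁, hN₁⟩ := hcauchyS η' hη'
    have hVs := (hVlimφ k s hsmem.1).eventually (Metric.ball_mem_nhds (w k s) hη')
    have hVs' := (hVlimφ k s' hs'mem.1).eventually (Metric.ball_mem_nhds (w k s') hη')
    obtain ⟨N₂, hN₂⟩ := (hVs.and (hVs'.and (hGevφ k))).exists_forall_of_atTop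
    refine ⟨max N₁ N₂, fun m hm n hn => ?_⟩
    have hm1 := le_trans (le_max_left _ _) hm
    have hm2 := le_trans (le_max_right _ _) hm
    have hn1 := le_trans (le_max_left _ _) hn
    have hn2 := le_trans (le_max_right _ _) hn
    obtain ⟨hVsm, hVs'm, happm⟩ := hN₂ m hm2
    obtain ⟨hVsn, hVs'n, happn⟩ := hN₂ n hn2
    -- the distance bound for a single index
    have hone : ∀ j, (∀ t' ∈ T, dist (F (φ j) t') (G k (φ j) t') ≤ ε k) →
        dist (V k (φ j) s) (w k s) < η' → dist (V k (φ j) s') (w k s') < η' →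
        dist (F (φ j) t) (F (φ j) s) ≤ 2 * ε k + 4 * η' := by
      intro j happ hVsj hVs'j
      have hst : s ≤ t := le_of_lt hsmem.2
      have hts' : t ≤ s' := le_of_lt hs'mem.2
      have hd1 : dist (G k (φ j) s) (G k (φ j) t) ≤ V k (φ j) t - V k (φ j) s :=
        hVdist k (φ j) (hD₀T hsmem.1) ht hst
      have hd2 : V k (φ j) t ≤ V k (φ j) s' := hVmono k (φ j) hts'
      have hd3 : dist (V k (φ j) s) (w k s) < η' := hVsj
      have hd4 : dist (V k (φ j) s') (w k s') < η' := hVs'j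
      rw [Real.dist_eq, abs_lt] at hd3 hd4
      have ht1 := happ t ht
      have ht2 := happ s (hD₀T hsmem.1)
      have htri : dist (F (φ j) t) (F (φ j) s) ≤
          dist (F (φ j) t) (G k (φ j) t) + dist (G k (φ j) t) (G k (φ j) s) +
            dist (G k (φ j) s) (F (φ j) s) := dist_triangle4 _ _ _ _
      rw [dist_comm (G k (φ j) t) (G k (φ j) s)] at htri
      have hws2 : w k s' - w k s < 2 * η' := by
        have : W k t - η' < w k s := hws
        have : w k s' < W k t + η' := by
          calc w k s' < sInf (w k '' (D₀ ∩ Ioi t)) + η' := hws'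
            _ ≤ W k t + η' := by linarith [hBA]
        linarith [hws]
      have hGFs : dist (G k (φ j) s) (F (φ j) s) = dist (F (φ j) s) (G k (φ j) s) :=
        dist_comm _ _
      linarith [hd1, hd2, htri, ht1, ht2, hws2, hd3.1, hd3.2, hd4.1, hd4.2, hGFs]
    have hm3 := hone m happm hVsm hVs'm
    have hn3 := hone n happn hVsn hVs'n
    have htrif : dist (F (φ m) t) (F (φ n) t) ≤
        dist (F (φ m) t) (F (φ m) s) + dist (F (φ m) s) (F (φ n) s) +
          dist (F (φ n) s) (F (φ n) t) := dist_triangle4 _ _ _ _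
    have hmid := hN₁ m hm1 n hn1
    have hlast : dist (F (φ n) s) (F (φ n) t) = dist (F (φ n) t) (F (φ n) s) := dist_comm _ _
    calc dist (F (φ m) t) (F (φ n) t) ≤ _ := htrif
      _ < (2 * ε k + 4 * η') + η' + (2 * ε k + 4 * η') := by
          rw [hlast]; linarith [hm3, hn3, hmid]
      _ ≤ η := by
          rw [hη'def]; linarith [hk, hεpos k]
  -- define the limit function
  have hconv : ∀ t, t ∈ T → ∃ x, Tendsto (fun j => F (φ j) t) atTop (𝓝 x) := by
    intro t ht
    obtain ⟨x, -, hx⟩ := cauchySeq_tendsto_of_isComplete (hcpt t ht).isComplete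
      (fun j => subset_closure ⟨φ j, rfl⟩) (key t ht)
    exact ⟨x, hx⟩
  choose f₀ hf₀ using hconv
  refine ⟨φ, hφ, fun t => if ht : t ∈ T then f₀ t ht else F 0 t, ?_, ?_, ?_, ?_⟩
  · intro t ht
    simpa only [dif_pos ht] using hf₀ t ht
  · -- boundedness
    have hbound : ∀ s ∈ T, ∀ u ∈ T,
        dist (if hs : s ∈ T then f₀ s hs else F 0 s) (if hu : u ∈ T then f₀ u hu else F 0 u) ≤
          2 * ε 0 + (C 0).toReal := by
      intro s hs u hu
      rw [dif_pos hs, dif_pos hu]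
      have h1 : Tendsto (fun j => dist (F (φ j) s) (F (φ j) u)) atTop
          (𝓝 (dist (f₀ s hs) (f₀ u hu))) := (hf₀ s hs).dist (hf₀ u hu)
      refine le_of_tendsto h1 ?_
      filter_upwards [hGevφ 0] with j hj
      have hd : dist (G 0 (φ j) s) (G 0 (φ j) u) ≤ (C 0).toReal :=
        dist_le_toReal_of_var (hCtop 0) (hG1 0 (φ j)) hs hu
      calc dist (F (φ j) s) (F (φ j) u) ≤
          dist (F (φ j) s) (G 0 (φ j) s) + dist (G 0 (φ j) s) (G 0 (φ j) u) +
            dist (G 0 (φ j) u) (F (φ j) u) := dist_triangle4 _ _ _ _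
        _ ≤ ε 0 + (C 0).toReal + ε 0 := by
            have := hj s hs
            have h2 := hj u hu
            rw [dist_comm (G 0 (φ j) u) (F (φ j) u)]
            linarith
        _ ≤ 2 * ε 0 + (C 0).toReal := by linarith
    refine lt_of_le_of_lt (EMetric.diam_le ?_) (ENNReal.ofReal_lt_top
      (r := 2 * ε 0 + (C 0).toReal))
    rintro x ⟨s, hs, rfl⟩ y ⟨u, hu, rfl⟩
    rw [edist_dist]
    exact ENNReal.ofReal_le_ofReal (hbound s hs u hu)
  · -- left regularity
    intro τ hτ hτacc η hη
    obtain ⟨k, hk⟩ := hεsmall (η / 4) (by linarith)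
    have haccD := hacc_left τ hτacc
    have hAne : (w k '' (D₀ ∩ Iio τ)).Nonempty := by
      obtain ⟨s, hs⟩ := haccD 1 one_pos
      exact ⟨w k s, mem_image_of_mem _ ⟨hs.1, hs.2.2⟩⟩
    obtain ⟨wp, ⟨p, hpmem, rfl⟩, hwp⟩ := exists_lt_of_lt_csSup hAne
      (show W k τ - η / 4 < W k τ by linarith)
    refine ⟨τ - p, by have h := hpmem.2; rw [mem_Iio] at h; linarith, ?_⟩
    have hmain : ∀ s ∈ T ∩ Ioo (τ - (τ - p)) τ, ∀ u ∈ T ∩ Ioo (τ - (τ - p)) τ, s ≤ u →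
        dist (if hs' : s ∈ T then f₀ s hs' else F 0 s)
          (if hu' : u ∈ T then f₀ u hu' else F 0 u) ≤ η := by
      intro s hsm u hum hsu
      rw [dif_pos hsm.1, dif_pos hum.1]
      have hsp : p < s := by have := hsm.2.1; linarith
      have huτ : u < τ := hum.2.2
      obtain ⟨q, hqD, hq⟩ := haccD (τ - u) (by linarith)
      have hqu : u < q := by have := hq.1; linarith
      have h1 : Tendsto (fun j => dist (F (φ j) s) (F (φ j) u)) atTop
          (𝓝 (dist (f₀ s hsm.1) (f₀ u hum.1))) := (hf₀ s hsm.1).dist (hf₀ u hum.1)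
      have h2 : Tendsto (fun j => 2 * ε k + (V k (φ j) q - V k (φ j) p)) atTop
          (𝓝 (2 * ε k + (w k q - w k p))) :=
        tendsto_const_nhds.add ((hVlimφ k q hqD).sub (hVlimφ k p hpmem.1))
      have h3 : ∀ᶠ j in atTop, dist (F (φ j) s) (F (φ j) u) ≤
          2 * ε k + (V k (φ j) q - V k (φ j) p) := by
        filter_upwards [hGevφ k] with j hj
        have t1 : dist (G k (φ j) s) (G k (φ j) u) ≤ V k (φ j) u - V k (φ j) s :=
          hVdist k (φ j) hsm.1 hum.1 hsu
        have t2 : V k (φ j) u ≤ V k (φ j) q := hVmono k (φ j) hqu.le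
        have t3 : V k (φ j) p ≤ V k (φ j) s := hVmono k (φ j) hsp.le
        have htri : dist (F (φ j) s) (F (φ j) u) ≤
            dist (F (φ j) s) (G k (φ j) s) + dist (G k (φ j) s) (G k (φ j) u) +
              dist (G k (φ j) u) (F (φ j) u) := dist_triangle4 _ _ _ _
        have ha1 := hj s hsm.1
        have ha2 := hj u hum.1
        rw [dist_comm (G k (φ j) u) (F (φ j) u)] at htri
        linarith
      have h4 : dist (f₀ s hsm.1) (f₀ u hum.1) ≤ 2 * ε k + (w k q - w k p) :=
        le_of_tendsto_of_tendsto h1 h2 h3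
      have h5 : w k q ≤ W k τ := le_csSup (hbddW k τ) (mem_image_of_mem _ ⟨hqD, hq.2⟩)
      linarith [hk, hεpos k]
    intro s hsm u hum
    rcases le_total s u with h | h
    · exact hmain s hsm u hum h
    · rw [dist_comm]; exact hmain u hum s hsm h
  · -- right regularity
    intro τ hτ hτacc η hη
    obtain ⟨k, hk⟩ := hεsmall (η / 4) (by linarith)
    have haccD := hacc_right τ hτacc
    have hBne : (w k '' (D₀ ∩ Ioi τ)).Nonempty := by
      obtain ⟨s, hs⟩ := haccD 1 one_pos
      exact ⟨w k s, mem_image_of_mem _ ⟨hs.1, hs.2.1⟩⟩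
    have hbddB : BddBelow (w k '' (D₀ ∩ Ioi τ)) :=
      ⟨0, by rintro y ⟨s, hs, rfl⟩; exact (hwmem k s hs.1).1⟩
    obtain ⟨wp, ⟨p, hpmem, rfl⟩, hwp⟩ := exists_lt_of_csInf_lt hBne
      (show sInf (w k '' (D₀ ∩ Ioi τ)) < sInf (w k '' (D₀ ∩ Ioi τ)) + η / 4 by linarith)
    refine ⟨p - τ, by have h := hpmem.2; rw [mem_Ioi] at h; linarith, ?_⟩
    have hmain : ∀ s ∈ T ∩ Ioo τ (τ + (p - τ)), ∀ u ∈ T ∩ Ioo τ (τ + (p - τ)), s ≤ u →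
        dist (if hs' : s ∈ T then f₀ s hs' else F 0 s)
          (if hu' : u ∈ T then f₀ u hu' else F 0 u) ≤ η := by
      intro s hsm u hum hsu
      rw [dif_pos hsm.1, dif_pos hum.1]
      have hτs : τ < s := hsm.2.1
      have hup : u < p := by have := hum.2.2; linarith
      obtain ⟨q, hqD, hq⟩ := haccD (s - τ) (by linarith)
      have hqs : q < s := by have := hq.2; linarith
      have h1 : Tendsto (fun j => dist (F (φ j) s) (F (φ j) u)) atTop
          (𝓝 (dist (f₀ s hsm.1) (f₀ u hum.1))) := (hf₀ s hsm.1).dist (hf₀ u hum.1)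
      have h2 : Tendsto (fun j => 2 * ε k + (V k (φ j) p - V k (φ j) q)) atTop
          (𝓝 (2 * ε k + (w k p - w k q))) :=
        tendsto_const_nhds.add ((hVlimφ k p hpmem.1).sub (hVlimφ k q hqD))
      have h3 : ∀ᶠ j in atTop, dist (F (φ j) s) (F (φ j) u) ≤
          2 * ε k + (V k (φ j) p - V k (φ j) q) := by
        filter_upwards [hGevφ k] with j hj
        have t1 : dist (G k (φ j) s) (G k (φ j) u) ≤ V k (φ j) u - V k (φ j) s :=
          hVdist k (φ j) hsm.1 hum.1 hsu
        have t2 : V k (φ j) u ≤ V k (φ j) p := hVmono k (φ j) hup.le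
        have t3 : V k (φ j) q ≤ V k (φ j) s := hVmono k (φ j) hqs.le
        have htri : dist (F (φ j) s) (F (φ j) u) ≤
            dist (F (φ j) s) (G k (φ j) s) + dist (G k (φ j) s) (G k (φ j) u) +
              dist (G k (φ j) u) (F (φ j) u) := dist_triangle4 _ _ _ _
        have ha1 := hj s hsm.1
        have ha2 := hj u hum.1
        rw [dist_comm (G k (φ j) u) (F (φ j) u)] at htri
        linarith
      have h4 : dist (f₀ s hsm.1) (f₀ u hum.1) ≤ 2 * ε k + (w k p - w k q) :=
        le_of_tendsto_of_tendsto h1 h2 h3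
      have h5 : sInf (w k '' (D₀ ∩ Ioi τ)) ≤ w k q :=
        csInf_le hbddB (mem_image_of_mem _ ⟨hqD, hq.1⟩)
      linarith [hk, hεpos k]
    intro s hsm u hum
    rcases le_total s u with h | h
    · exact hmain s hsm u hum h
    · rw [dist_comm]; exact hmain u hum s hsm h
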